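/- For any k ≥ 2 and dimensions d₁, …, d_k ≥ 2, the linear span S_{P,0} of the Parthasarathy space S_P and z₀ = |0⟩ ⊗ ⋯ ⊗ |0⟩ contains no nonzero product vector other than the scalar multiples of z₀. Likewise, the linear span S_{P,∞} of S_P and z_∞ = |d₁−1⟩ ⊗ ⋯ ⊗ |d_k−1⟩ contains no nonzero product vector other than the scalar multiples of z_∞. -/

import Mathlib

noncomputable section

open scoped BigOperators

/-- the multipartite Hilbert space ℂ^{d₁} ⊗ ⋯ ⊗ ℂ^{d_k}, realized as ℂ^{d₁⋯d_k} -/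
abbrev Hmulti (k : ℕ) (d : Fin k → ℕ) : Type := EuclideanSpace ℂ (∀ j, Fin (d j))

/-- elementary tensor u₁ ⊗ ⋯ ⊗ u_k -/
def tpk (k : ℕ) (d : Fin k → ℕ) (u : ∀ j, EuclideanSpace ℂ (Fin (d j))) : Hmulti k d :=
  WithLp.toLp 2 (fun i => ∏ j, u j (i j))

/-- the van der Monde vector z_λ = ⊗_j (Σ_s λ^s |s⟩) -/
def zlam (k : ℕ) (d : Fin k → ℕ) (lam : ℂ) : Hmulti k d :=
  WithLp.toLp 2 (fun i => ∏ j, lam ^ ((i j : ℕ)))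

/-- the van der Monde vector z_∞ = ⊗_j |d_j − 1⟩ -/
def zinf (k : ℕ) (d : Fin k → ℕ) : Hmulti k d :=
  WithLp.toLp 2 (fun i => ∏ j, (if (i j : ℕ) = d j - 1 then 1 else 0))

/-- the span of all van der Monde vectors -/
def Fspan (k : ℕ) (d : Fin k → ℕ) : Submodule ℂ (Hmulti k d) :=
  Submodule.span ℂ (insert (zinf k d) (Set.range (zlam k d)))

/-- the Parthasarathy completely entangled subspace -/
def SP (k : ℕ) (d : Fin k → ℕ) : Submodule ℂ (Hmulti k d) := (Fspan k d)ᗮ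

namespace Stmt10

open Polynomial

variable {k : ℕ} {d : Fin k → ℕ}

def pj (d : Fin k → ℕ) (u : ∀ j, EuclideanSpace ℂ (Fin (d j))) (j : Fin k) : ℂ[X] :=
  ∑ s : Fin (d j), C (u j s) * X ^ (s : ℕ)

lemma pj_eval (u : ∀ j, EuclideanSpace ℂ (Fin (d j))) (j : Fin k) (t : ℂ) :
    (pj d u j).eval t = ∑ s : Fin (d j), t ^ (s : ℕ) * u j s := by
  rw [pj, eval_finset_sum]
  exact Finset.sum_congr rfl fun s _ => by rw [eval_mul, eval_C, eval_pow, eval_X, mul_comm]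

lemma pj_coeff (u : ∀ j, EuclideanSpace ℂ (Fin (d j))) (j : Fin k) (s : Fin (d j)) :
    (pj d u j).coeff (s : ℕ) = u j s := by
  simp only [pj, finset_sum_coeff, coeff_C_mul, coeff_X_pow, mul_ite, mul_one, mul_zero]
  rw [Finset.sum_eq_single s] <;> simp +contextual [Fin.val_eq_val, eq_comm]

lemma pj_natDegree_le (u : ∀ j, EuclideanSpace ℂ (Fin (d j))) (j : Fin k) :
    (pj d u j).natDegree ≤ d j - 1 := by
  apply natDegree_sum_le_of_forall_le
  intro s _
  refine natDegree_mul_le.trans ?_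
  simp only [natDegree_C, natDegree_X_pow, zero_add]
  exact Nat.le_sub_one_of_lt s.isLt

lemma inner_zlam_tpk (lam : ℂ) (u : ∀ j, EuclideanSpace ℂ (Fin (d j))) :
    (inner ℂ (zlam k d lam) (tpk k d u) : ℂ)
      = ∏ j, (pj d u j).eval (starRingEnd ℂ lam) := by
  classical
  have h1 : (inner ℂ (zlam k d lam) (tpk k d u) : ℂ)
      = ∑ i : ∀ j, Fin (d j), ∏ j, ((starRingEnd ℂ lam) ^ ((i j : ℕ)) * u j (i j)) := by
    simp [zlam, tpk, PiLp.inner_apply, RCLike.inner_apply, map_prod, map_pow,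
      Finset.prod_mul_distrib]
    exact Finset.sum_congr rfl fun _ _ => mul_comm _ _
  have h2 : ∏ j, (pj d u j).eval (starRingEnd ℂ lam)
      = ∑ i : ∀ j, Fin (d j), ∏ j, ((starRingEnd ℂ lam) ^ ((i j : ℕ)) * u j (i j)) := by
    simp_rw [pj_eval]
    exact Fintype.prod_sum _
  rw [h1, h2]

lemma tpk_zero_of_pj_zero (u : ∀ j, EuclideanSpace ℂ (Fin (d j))) (j : Fin k)
    (h : pj d u j = 0) : tpk k d u = 0 := by
  ext i
  have : u j (i j) = 0 := by rw [← pj_coeff u j (i j), h, coeff_zero]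
  simpa [tpk] using Finset.prod_eq_zero (Finset.mem_univ j) this

lemma mem_sup_decomp (v ξ : Hmulti k d) (h : ξ ∈ SP k d ⊔ Submodule.span ℂ {v}) :
    ∃ c : ℂ, ∀ lam : ℂ, (inner ℂ (zlam k d lam) ξ : ℂ) = c * inner ℂ (zlam k d lam) v := by
  rcases Submodule.mem_sup.mp h with ⟨η, hη, z, hz, rfl⟩
  rcases Submodule.mem_span_singleton.mp hz with ⟨c, rfl⟩
  refine ⟨c, fun lam => ?_⟩
  have hzl : zlam k d lam ∈ Fspan k d :=
    Submodule.subset_span (Set.mem_insert_iff.mpr (Or.inr ⟨lam, rfl⟩))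
  have h0 : (inner ℂ (zlam k d lam) η : ℂ) = 0 := (Submodule.mem_orthogonal _ _).mp hη _ hzl
  simp [inner_add_right, inner_smul_right, h0]

lemma sum_pow_ite (t : ℂ) {n m : ℕ} (h : m < n) :
    ∑ s : Fin n, t ^ (s : ℕ) * (if (s : ℕ) = m then 1 else 0) = t ^ m := by
  rw [Finset.sum_eq_single (⟨m, h⟩ : Fin n)] <;>
    simp +contextual [Fin.ext_iff]

lemma zlam_zero_eq : zlam k d 0 = tpk k d (fun j => WithLp.toLp 2 (fun s => if (s : ℕ) = 0 then 1 else 0)) := by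
  ext i
  simp [zlam, tpk, zero_pow_eq]

lemma zinf_eq : zinf k d = tpk k d (fun j => WithLp.toLp 2 (fun s => if (s : ℕ) = d j - 1 then 1 else 0)) := rfl

lemma tpk_eq_ite (u : ∀ j, EuclideanSpace ℂ (Fin (d j))) (a : Fin k → ℂ) (m : Fin k → ℕ)
    (hu : ∀ j s, u j s = if (s : ℕ) = m j then a j else 0) :
    tpk k d u = WithLp.toLp 2 (fun i => (∏ j, a j) * ∏ j, (if (i j : ℕ) = m j then (1:ℂ) else 0)) := by
  ext i
  show ∏ j, u j (i j) = (∏ j, a j) * ∏ j, (if (i j : ℕ) = m j then (1:ℂ) else 0)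
  rw [← Finset.prod_mul_distrib]
  exact Finset.prod_congr rfl fun j _ => by simp [tpk, hu, mul_ite]

lemma inner_zlam_zlam0 (hd : ∀ j, 2 ≤ d j) (lam : ℂ) :
    (inner ℂ (zlam k d lam) (zlam k d 0) : ℂ) = 1 := by
  rw [zlam_zero_eq, inner_zlam_tpk]
  refine Finset.prod_eq_one fun j _ => ?_
  rw [pj_eval]
  simp only [PiLp.toLp_apply]
  rw [sum_pow_ite _ (by have := hd j; omega : 0 < d j), pow_zero]

lemma inner_zlam_zinf (hd : ∀ j, 2 ≤ d j) (lam : ℂ) :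
    (inner ℂ (zlam k d lam) (zinf k d) : ℂ) = (starRingEnd ℂ lam) ^ (∑ j, (d j - 1)) := by
  rw [zinf_eq, inner_zlam_tpk, ← Finset.prod_pow_eq_pow_sum]
  refine Finset.prod_congr rfl fun j _ => ?_
  rw [pj_eval]
  simp only [PiLp.toLp_apply]
  rw [sum_pow_ite _ (by have := hd j; omega : d j - 1 < d j)]

end Stmt10

open Stmt10 Polynomial in
theorem statement10 (k : ℕ) (hk : 2 ≤ k) (d : Fin k → ℕ) (hd : ∀ j, 2 ≤ d j) :
    (∀ ξ ∈ SP k d ⊔ Submodule.span ℂ {zlam k d 0}, ξ ≠ 0 →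
      (∃ u, ξ = tpk k d u) → ∃ c : ℂ, ξ = c • zlam k d 0) ∧
    (∀ ξ ∈ SP k d ⊔ Submodule.span ℂ {zinf k d}, ξ ≠ 0 →
      (∃ u, ξ = tpk k d u) → ∃ c : ℂ, ξ = c • zinf k d) := by
  constructor
  · rintro ξ hmem hne ⟨u, rfl⟩
    obtain ⟨c, hc⟩ := mem_sup_decomp _ _ hmem
    have hne0 : ∀ j, pj d u j ≠ 0 := fun j h => hne (tpk_zero_of_pj_zero u j h)
    have hQ : ∏ j, pj d u j = C c := by
      apply Polynomial.funext; intro t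
      have h := hc (starRingEnd ℂ t)
      rw [inner_zlam_tpk, inner_zlam_zlam0 hd, mul_one] at h
      simp only [Complex.conj_conj] at h
      rw [eval_prod, eval_C]
      exact h
    have hc0 : c ≠ 0 := by
      rintro rfl
      rw [map_zero] at hQ
      exact Finset.prod_ne_zero_iff.mpr (fun j _ => hne0 j) hQ
    have hU : ∀ j, IsUnit (pj d u j) := fun j =>
      isUnit_of_dvd_unit (Finset.dvd_prod_of_mem _ (Finset.mem_univ j))
        (hQ ▸ isUnit_C.mpr hc0.isUnit)
    choose a ha hCa using fun j => Polynomial.isUnit_iff.mp (hU j)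
    have hu : ∀ j s, u j s = if (s : ℕ) = 0 then a j else 0 := fun j s => by
      rw [← pj_coeff u j s, ← hCa j, coeff_C]
    refine ⟨∏ j, a j, ?_⟩
    rw [tpk_eq_ite u a (fun _ => 0) hu]
    ext i
    simp [zlam, zero_pow_eq, PiLp.smul_apply, smul_eq_mul]
  · rintro ξ hmem hne ⟨u, rfl⟩
    obtain ⟨c, hc⟩ := mem_sup_decomp _ _ hmem
    have hne0 : ∀ j, pj d u j ≠ 0 := fun j h => hne (tpk_zero_of_pj_zero u j h)
    have hQ : ∏ j, pj d u j = C c * X ^ (∑ j, (d j - 1)) := by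
      apply Polynomial.funext; intro t
      have h := hc (starRingEnd ℂ t)
      rw [inner_zlam_tpk, inner_zlam_zinf hd] at h
      simp only [Complex.conj_conj] at h
      rw [eval_prod, eval_mul, eval_C, eval_pow, eval_X]
      exact h
    have hc0 : c ≠ 0 := by
      rintro rfl
      rw [map_zero, zero_mul] at hQ
      exact Finset.prod_ne_zero_iff.mpr (fun j _ => hne0 j) hQ
    have hdeg : ∀ j, (pj d u j).natDegree = d j - 1 := by
      have hsum : ∑ j, (pj d u j).natDegree = ∑ j, (d j - 1) := by
        rw [← Polynomial.natDegree_prod _ _ (fun j _ => hne0 j), hQ,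
          natDegree_C_mul_X_pow _ c hc0]
      exact fun j =>
        (Finset.sum_eq_sum_iff_of_le (fun j _ => pj_natDegree_le u j)).mp hsum j
          (Finset.mem_univ j)
    have hform : ∀ j, ∃ r : ℂ, ∀ s : Fin (d j), u j s = if (s : ℕ) = d j - 1 then r else 0 := by
      intro j
      have hdvd : pj d u j ∣ X ^ (∑ j, (d j - 1)) := by
        have h1 : pj d u j ∣ C c * X ^ (∑ j, (d j - 1)) :=
          hQ ▸ Finset.dvd_prod_of_mem _ (Finset.mem_univ j)
        exact h1.trans ⟨C c⁻¹, by
          rw [mul_right_comm, ← C_mul, mul_inv_cancel₀ hc0, map_one, one_mul]⟩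
      obtain ⟨m, hmN, hass⟩ := (dvd_prime_pow prime_X _).mp hdvd
      obtain ⟨w, hw⟩ := hass.symm
      obtain ⟨r, hrU, hCr⟩ := Polynomial.isUnit_iff.mp w.isUnit
      have hpj : pj d u j = C r * X ^ m := by rw [← hw, ← hCr, mul_comm]
      have hm : m = d j - 1 := by
        rw [← hdeg j, hpj, natDegree_C_mul_X_pow m r hrU.ne_zero]
      refine ⟨r, fun s => ?_⟩
      rw [← pj_coeff u j s, hpj, hm]
      simp [coeff_C_mul, coeff_X_pow, mul_ite]
    choose r hr using hform
    refine ⟨∏ j, r j, ?_⟩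
    rw [tpk_eq_ite u r (fun j => d j - 1) hr]
    ext i
    simp [zinf, PiLp.smul_apply, smul_eq_mul]
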